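/- If C is a κ⁺-Countryman line, then C has no dense suborder of cardinality κ; i.e., no subset D ⊆ C of cardinality at most κ is dense in C. -/

import Mathlib

open Cardinal

/-- A linear order `C` is `κ⁺`-Countryman if it has cardinality `κ⁺` and `C × C`
(with the coordinatewise order) is the union of `κ` many chains. -/
def IsCountryman (κ : Cardinal.{u}) (C : Type u) [LinearOrder C] : Prop :=
  #C = Order.succ κ ∧
    ∃ 𝒵 : Set (Set (C × C)), #𝒵 ≤ κ ∧ (∀ Z ∈ 𝒵, IsChain (· ≤ ·) Z) ∧ ⋃₀ 𝒵 = Set.univ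

/-- The lower `D`-cut of an element. -/
def cutS {C : Type u} [LinearOrder C] (D : Set C) (c : C) : Set C :=
  {d | d ∈ D ∧ d < c}

theorem mem_cutS {C : Type u} [LinearOrder C] {D : Set C} {c d : C} :
    d ∈ cutS D c ↔ d ∈ D ∧ d < c := Iff.rfl

open Classical in
noncomputable def repS {C : Type u} [LinearOrder C] [Nonempty C] (D : Set C) (v : Set C) : C :=
  if h : ∃ c, cutS D c = v then h.choose else Classical.arbitrary C

theorem repS_spec {C : Type u} [LinearOrder C] [Nonempty C] {D : Set C} {v : Set C}
    (h : v ∈ Set.range (cutS D)) : cutS D (repS D v) = v := by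
  obtain ⟨c, rfl⟩ := h
  have h' : ∃ c', cutS D c' = cutS D c := ⟨c, rfl⟩
  unfold repS
  rw [dif_pos h']
  exact h'.choose_spec

/-- The fiber of a chain `Z` over `a`, restricted to a set `S`. -/
def piS {C : Type u} [LinearOrder C] (S : Set C) (Z : Set (C × C)) (a : C) : Set C :=
  {b | b ∈ S ∧ (a, b) ∈ Z}

theorem mem_piS {C : Type u} [LinearOrder C] {S : Set C} {Z : Set (C × C)} {a b : C} :
    b ∈ piS S Z a ↔ b ∈ S ∧ (a, b) ∈ Z := Iff.rfl

/-- A `κ⁺`-Countryman line has no dense suborder of cardinality at most `κ`. -/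
theorem stmt4 (κ : Cardinal.{u}) (hκ : ℵ₀ ≤ κ) (C : Type u) [LinearOrder C]
    (hC : IsCountryman κ C) :
    ¬ ∃ D : Set C, #D ≤ κ ∧
        ∀ a b : C, a < b → (∃ c, a < c ∧ c < b) → ∃ d ∈ D, a < d ∧ d < b := by
  classical
  obtain ⟨hCcard, 𝒵, h𝒵, hchain, hcover⟩ := hC
  rintro ⟨D, hD, hdense⟩
  have hκlt : κ < #C := by rw [hCcard]; exact Order.lt_succ κ
  haveI hCne : Nonempty C := by
    rw [← Cardinal.mk_ne_zero_iff]
    exact (((zero_le : (0 : Cardinal) ≤ κ)).trans_lt hκlt).ne'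
  -- A pigeonhole principle: a union of ≤ κ sets each of size ≤ κ has size ≤ κ.
  have PH : ∀ {α : Type u} (I : Set α) (f : α → Set C) (s : Set C),
      (∀ b ∈ s, ∃ i ∈ I, b ∈ f i) → #I ≤ κ → (∀ i ∈ I, #(f i) ≤ κ) → #s ≤ κ := by
    intro α I f s hsub hI hf
    have h1 : s ⊆ ⋃ i : I, f i := by
      intro b hb
      obtain ⟨i, hi, hbf⟩ := hsub b hb
      exact Set.mem_iUnion.mpr ⟨⟨i, hi⟩, hbf⟩
    calc #s ≤ #(⋃ i : I, f ↑i) := Cardinal.mk_le_mk_of_subset h1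
      _ ≤ Cardinal.sum fun i : I => #(f ↑i) := Cardinal.mk_iUnion_le_sum_mk
      _ ≤ Cardinal.sum fun _ : I => κ :=
          Cardinal.sum_le_sum _ _ (fun i => hf ↑i i.2)
      _ = #I * κ := Cardinal.sum_const' _ _
      _ ≤ κ * κ := mul_le_mul_left hI κ
      _ = κ := Cardinal.mul_eq_self hκ
  -- Density: no strictly increasing triple x < y < z with cutS D x = cutS D z.
  have key : ∀ x y z : C, x < y → y < z → cutS D x = cutS D z → False := by
    intro x y z h1 h2 he
    obtain ⟨d, hdD, hxd, hdz⟩ := hdense x z (h1.trans h2) ⟨y, h1, h2⟩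
    have hmem : d ∈ cutS D z := ⟨hdD, hdz⟩
    rw [← he] at hmem
    exact absurd hmem.2 (not_lt.mpr hxd.le)
  -- Hence every fiber of `cutS D` has at most two elements.
  have hfiber : ∀ v : Set C, #{c : C | cutS D c = v} ≤ κ := by
    intro v
    by_contra hbig
    push_neg at hbig
    have h3 : ∀ x y z : C, cutS D x = v → cutS D y = v → cutS D z = v →
        x ≠ y → x ≠ z → y ≠ z → False := by
      intro x y z hx hy hz hxy hxz hyz
      rcases lt_trichotomy x y with h | h | h
      · rcases lt_trichotomy y z with h' | h' | h'
        · exact key x y z h h' (hx.trans hz.symm)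
        · exact hyz h'
        · rcases lt_trichotomy x z with h'' | h'' | h''
          · exact key x z y h'' h' (hx.trans hy.symm)
          · exact hxz h''
          · exact key z x y h'' h (hz.trans hy.symm)
      · exact hxy h
      · rcases lt_trichotomy x z with h' | h' | h'
        · exact key y x z h h' (hy.trans hz.symm)
        · exact hxz h'
        · rcases lt_trichotomy y z with h'' | h'' | h''
          · exact key y z x h'' h' (hy.trans hx.symm)
          · exact hyz h''
          · exact key z y x h'' h (hz.trans hx.symm)
    have h1 : (1 : Cardinal) < #{c : C | cutS D c = v} :=
      lt_of_le_of_lt (le_trans Cardinal.one_le_aleph0 hκ) hbig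
    rw [Cardinal.one_lt_iff_nontrivial] at h1
    obtain ⟨a, ha, b, hb, hab⟩ := Set.nontrivial_coe_sort.mp h1
    have hsub2 : {c : C | cutS D c = v} ⊆ {a, b} := by
      intro c hc
      by_contra hc2
      simp only [Set.mem_insert_iff, Set.mem_singleton_iff, not_or] at hc2
      exact h3 a b c ha hb hc hab (Ne.symm hc2.1) (Ne.symm hc2.2)
    have hsmall : #{c : C | cutS D c = v} ≤ κ := by
      calc #{c : C | cutS D c = v} ≤ #({a, b} : Set C) := Cardinal.mk_le_mk_of_subset hsub2
        _ ≤ ℵ₀ := ((Set.finite_singleton b).insert a).lt_aleph0.le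
        _ ≤ κ := hκ
    exact absurd hsmall (not_le.mpr hbig)
  -- The range of the cut map is large.
  have hQ : κ < #(Set.range (cutS D)) := by
    by_contra h
    push_neg at h
    have huniv : #(Set.univ : Set C) ≤ κ := by
      refine PH (Set.range (cutS D)) (fun v => {c : C | cutS D c = v}) Set.univ ?_ h ?_
      · intro b _
        exact ⟨cutS D b, ⟨b, rfl⟩, rfl⟩
      · intro v _
        exact hfiber v
    rw [Cardinal.mk_univ] at huniv
    exact absurd huniv (not_le.mpr hκlt)
  -- The transversal S: one point per cut value.
  set S : Set C := repS D '' Set.range (cutS D) with hSdef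
  have hinjrep : Set.InjOn (repS D) (Set.range (cutS D)) := by
    intro u hu v hv he
    rw [← repS_spec hu, ← repS_spec hv, he]
  have hSbig : κ < #S := by
    rw [hSdef, Cardinal.mk_image_eq_of_injOn (repS D) _ hinjrep]
    exact hQ
  have hScut : ∀ a ∈ S, ∀ b ∈ S, cutS D a = cutS D b → a = b := by
    rintro a ⟨u, hu, rfl⟩ b ⟨v, hv, rfl⟩ he
    rw [repS_spec hu, repS_spec hv] at he
    rw [he]
  -- For each a find a chain whose fiber over a intersects S in a large set.
  have hZsel : ∀ a : C, ∃ Z ∈ 𝒵, κ < #(piS S Z a) := by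
    intro a
    by_contra h
    push_neg at h
    have : #S ≤ κ := by
      refine PH 𝒵 (fun Z => piS S Z a) S ?_ h𝒵 h
      intro b hb
      have hmem : (a, b) ∈ ⋃₀ 𝒵 := by rw [hcover]; trivial
      obtain ⟨Z, hZ, hab⟩ := hmem
      exact ⟨Z, hZ, hb, hab⟩
    exact absurd this (not_le.mpr hSbig)
  choose Zsel hZselmem hZselbig using hZsel
  -- A single chain works for a large set A ⊆ S.
  have hA : ∃ Z ∈ 𝒵, κ < #{a | a ∈ S ∧ Zsel a = Z} := by
    by_contra h
    push_neg at h
    have : #S ≤ κ := by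
      refine PH 𝒵 (fun Z => {a | a ∈ S ∧ Zsel a = Z}) S ?_ h𝒵 h
      intro a ha
      exact ⟨Zsel a, hZselmem a, ha, rfl⟩
    exact absurd this (not_le.mpr hSbig)
  obtain ⟨Z, hZmem, hAbig⟩ := hA
  set A : Set C := {a | a ∈ S ∧ Zsel a = Z} with hAdef
  -- For each a ∈ A pick two elements X a < Y a of the fiber piS S Z a.
  have hxy : ∀ a : ↥A, ∃ x y : C, x ∈ piS S Z (a : C) ∧ y ∈ piS S Z (a : C) ∧ x < y := by
    intro a
    have hbig : κ < #(piS S Z (a : C)) := by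
      have h0 := hZselbig (a : C)
      rwa [a.2.2] at h0
    have hnt : (piS S Z (a : C)).Nontrivial := by
      by_contra h
      rw [Set.not_nontrivial_iff] at h
      have h1 : #(piS S Z (a : C)) ≤ 1 := Cardinal.mk_le_one_iff_set_subsingleton.mpr h
      exact absurd (h1.trans (Cardinal.one_le_aleph0.trans hκ)) (not_le.mpr hbig)
    obtain ⟨x, hx, y, hy, hne⟩ := hnt
    rcases hne.lt_or_gt with h | h
    · exact ⟨x, y, hx, hy, h⟩
    · exact ⟨y, x, hy, hx, h⟩
  choose X Y hX hY hXY using hxy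
  -- For each a ∈ A pick d ∈ D with X a ≤ d < Y a.
  have hd : ∀ a : ↥A, ∃ d, d ∈ D ∧ X a ≤ d ∧ d < Y a := by
    intro a
    have hXS : X a ∈ S := (hX a).1
    have hYS : Y a ∈ S := (hY a).1
    have hne : cutS D (X a) ≠ cutS D (Y a) := by
      intro he
      exact absurd (hScut _ hXS _ hYS he) (ne_of_lt (hXY a))
    have hsub : cutS D (X a) ⊆ cutS D (Y a) := by
      intro d hdm
      exact ⟨hdm.1, hdm.2.trans (hXY a)⟩
    obtain ⟨d, hdY, hdX⟩ := Set.exists_of_ssubset (ssubset_of_subset_of_ne hsub hne)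
    exact ⟨d, hdY.1, le_of_not_gt (fun h => hdX ⟨hdY.1, h⟩), hdY.2⟩
  choose F hFD hXF hFY using hd
  -- F is strictly monotone on A, by the chain property of Z.
  have hmono : ∀ a b : ↥A, (a : C) < (b : C) → F a < F b := by
    intro a b hab
    have h1 : ((a : C), Y a) ∈ Z := (hY a).2
    have h2 : ((b : C), X b) ∈ Z := (hX b).2
    have hne : ((a : C), Y a) ≠ ((b : C), X b) := by
      intro h
      exact absurd (congrArg Prod.fst h) (ne_of_lt hab)
    rcases hchain Z hZmem h1 h2 hne with h | h
    · calc F a < Y a := hFY a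
        _ ≤ X b := h.2
        _ ≤ F b := hXF b
    · exact absurd h.1 (not_le.mpr hab)
  -- Hence an injection of A into D, contradicting the size of A.
  have hinj : Function.Injective fun a : ↥A => (⟨F a, hFD a⟩ : ↥D) := by
    intro a b he
    have hFe : F a = F b := congrArg Subtype.val he
    by_contra hne
    have hvne : (a : C) ≠ (b : C) := fun h => hne (Subtype.coe_injective h)
    rcases hvne.lt_or_gt with h | h
    · exact absurd hFe (ne_of_lt (hmono a b h))
    · exact absurd hFe.symm (ne_of_lt (hmono b a h))
  have hAsmall : #A ≤ κ := (Cardinal.mk_le_of_injective hinj).trans hD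
  exact absurd hAsmall (not_le.mpr hAbig)
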